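/- arXiv:1609.07444 — 3 statements merged into one kernel-verified Lean document; each statement's English description precedes it below -/
import Mathlib

section
/- Let f₁(x) = −|x₁−x₂|^{−A} for x₂ > x₁ and f₁(x) = |x₁−x₂|^{−A} for x₂ < x₁. Let f₂(x) = |x₁−x₂|^{−A} for x₂−x₁ > 0 or x₂−x₁ < −ε, and f₂(x) = φ(x₂−x₁) for −ε ≤ x₂−x₁ < 0, where φ is the quadratic polynomial with φ(−ε) = ε^{−A}, φ'(−ε) = −Aε^{−A−1}, φ''(−ε) = A(A+1)ε^{−A−2}. Then there is a constant c > 0 depending only on A such that ∫_{|x₁−x₂|<ε} |f₁(x) − f₂(x)| dx ≥ c·ε^{1−A} for all sufficiently small ε > 0. -/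
open MeasureTheory Set

lemma II_abs_rpow {A : ℝ} (hA1 : A < 1) (a b : ℝ) :
    IntervalIntegrable (fun t : ℝ => |t| ^ (-A)) volume a b := by
  suffices h : ∀ c : ℝ, 0 ≤ c → IntervalIntegrable (fun t : ℝ => |t| ^ (-A)) volume 0 c by
    have h' : ∀ c : ℝ, IntervalIntegrable (fun t : ℝ => |t| ^ (-A)) volume 0 c := by
      intro c
      rcases le_total 0 c with hc | hc
      · exact h c hc
      · rw [IntervalIntegrable.iff_comp_neg, neg_zero]
        simpa [abs_neg] using h (-c) (by linarith)
    exact (h' a).symm.trans (h' b)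
  intro c hc
  have h0 := intervalIntegral.intervalIntegrable_rpow' (a := 0) (b := c) (r := -A) (by linarith)
  rw [intervalIntegrable_iff, uIoc_of_le hc] at h0 ⊢
  exact h0.congr_fun (fun x hx => by rw [abs_of_pos hx.1]) measurableSet_Ioc

lemma slice_int {A : ℝ} (hA1 : A < 1) (a : ℝ) :
    IntegrableOn (fun t : ℝ => |a - t| ^ (-A)) (Icc 0 1) := by
  have := (II_abs_rpow hA1 (a - 0) (a - 1)).comp_sub_left a
  simp only [sub_sub_cancel] at this
  exact (intervalIntegrable_iff_integrableOn_Icc_of_le zero_le_one).mp this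

lemma slice_bound {A : ℝ} (hA1 : A < 1) {a : ℝ} (ha : a ∈ Icc (0:ℝ) 1) :
    ∫ t in Icc (0:ℝ) 1, |a - t| ^ (-A) ≤ ∫ u in Ioc (-1:ℝ) 1, |u| ^ (-A) := by
  have h1 : ∫ t in Icc (0:ℝ) 1, |a - t| ^ (-A) = ∫ t in (0:ℝ)..1, |a - t| ^ (-A) := by
    rw [intervalIntegral.integral_of_le zero_le_one, integral_Icc_eq_integral_Ioc]
  have h2 : ∫ t in (0:ℝ)..1, |a - t| ^ (-A)
      = ∫ u in (a - 1)..(a - 0), |u| ^ (-A) := by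
    rw [intervalIntegral.integral_comp_sub_left (fun u => |u| ^ (-A)) a]
  rw [h1, h2, sub_zero, intervalIntegral.integral_of_le (by linarith [ha.1] : a - 1 ≤ a)]
  apply setIntegral_mono_set
  · rw [← intervalIntegrable_iff_integrableOn_Ioc_of_le (by norm_num : (-1:ℝ) ≤ 1)]
    exact II_abs_rpow hA1 _ _
  · filter_upwards with x using Real.rpow_nonneg (abs_nonneg x) _
  · apply HasSubset.Subset.eventuallyLE
    exact Ioc_subset_Ioc (by linarith [ha.1]) ha.2

lemma g_int_square {A : ℝ} (hA1 : A < 1) :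
    IntegrableOn (fun x : ℝ × ℝ => |x.1 - x.2| ^ (-A)) (Icc (0:ℝ) 1 ×ˢ Icc (0:ℝ) 1) := by
  have hmg : Measurable (fun x : ℝ × ℝ => |x.1 - x.2| ^ (-A)) := by fun_prop
  rw [IntegrableOn, Measure.volume_eq_prod, ← Measure.prod_restrict]
  have hsm : AEStronglyMeasurable (fun x : ℝ × ℝ => |x.1 - x.2| ^ (-A))
      ((volume.restrict (Icc (0:ℝ) 1)).prod (volume.restrict (Icc (0:ℝ) 1))) :=
    hmg.aestronglyMeasurable
  rw [integrable_prod_iff hsm]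
  constructor
  · exact Filter.Eventually.of_forall fun a => slice_int hA1 a
  · set M := ∫ u in Ioc (-1:ℝ) 1, |u| ^ (-A)
    apply Integrable.mono' (integrable_const M) (hsm.norm.integral_prod_right')
    filter_upwards [ae_restrict_mem measurableSet_Icc] with a ha
    have hnn : ∀ t : ℝ, (0:ℝ) ≤ |a - t| ^ (-A) := fun t => Real.rpow_nonneg (abs_nonneg _) _
    have : (fun t => ‖|a - t| ^ (-A)‖) = fun t => |a - t| ^ (-A) := by
      funext t; rw [Real.norm_eq_abs, abs_of_nonneg (hnn t)]
    rw [Real.norm_eq_abs, this, abs_of_nonneg (integral_nonneg fun t => hnn t)]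
    exact slice_bound hA1 ha

/-- Lower bound on the L¹ distance over the diagonal strip between the two
functions `f₁` and `f₂` of Section 4, each satisfying the regularity
conditions; here `φ` is the quadratic matching `|t|^{−A}` to second order
at `t = −ε`. -/
theorem extension_gap_lower_bound (A : ℝ) (hA : 0 < A) (hA1 : A < 1) :
    ∃ c > 0, ∃ ε₀ > 0, ∀ ε : ℝ, 0 < ε → ε < ε₀ →
      let f₁ : ℝ × ℝ → ℝ := fun x =>
        if x.1 < x.2 then -(|x.1 - x.2| ^ (-A)) else |x.1 - x.2| ^ (-A)
      let φ : ℝ → ℝ := fun t =>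
        ε ^ (-A) + (-A * ε ^ (-A - 1)) * (t + ε)
          + (A * (A + 1) * ε ^ (-A - 2) / 2) * (t + ε) ^ 2
      let f₂ : ℝ × ℝ → ℝ := fun x =>
        if -ε ≤ x.2 - x.1 ∧ x.2 - x.1 < 0 then φ (x.2 - x.1)
        else |x.1 - x.2| ^ (-A)
      c * ε ^ (1 - A) ≤
        ∫ x in {x : ℝ × ℝ | x ∈ Icc (0:ℝ) 1 ×ˢ Icc (0:ℝ) 1 ∧ |x.1 - x.2| < ε},
          |f₁ x - f₂ x| := by
  refine ⟨1, one_pos, 1/2, by norm_num, ?_⟩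
  intro ε hε hε2 f₁ φ f₂
  set g : ℝ × ℝ → ℝ := fun x => |x.1 - x.2| ^ (-A) with hg
  have hgnn : ∀ x, 0 ≤ g x := fun x => Real.rpow_nonneg (abs_nonneg _) _
  set S : Set (ℝ × ℝ) := {x : ℝ × ℝ | x ∈ Icc (0:ℝ) 1 ×ˢ Icc (0:ℝ) 1 ∧ |x.1 - x.2| < ε}
    with hS
  have hSsub : S ⊆ Icc (0:ℝ) 1 ×ˢ Icc (0:ℝ) 1 := fun x hx => hx.1
  have hSfin : volume S ≠ ⊤ :=
    ((measure_mono hSsub).trans_lt (isCompact_Icc.prod isCompact_Icc).measure_lt_top).ne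
  have hgS : IntegrableOn g S := (g_int_square hA1).mono_set hSsub
  have hf₁m : Measurable f₁ :=
    Measurable.ite (measurableSet_lt measurable_fst measurable_snd) (by fun_prop) (by fun_prop)
  have hf₂m : Measurable f₂ :=
    Measurable.ite ((measurableSet_le measurable_const
        (measurable_snd.sub measurable_fst)).inter
        (measurableSet_lt (measurable_snd.sub measurable_fst) measurable_const))
      (by fun_prop) (by fun_prop)
  -- integrability of f₁
  have hf₁S : IntegrableOn f₁ S := by
    apply hgS.mono' hf₁m.aestronglyMeasurable
    filter_upwards with x
    rw [Real.norm_eq_abs]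
    show |if x.1 < x.2 then -(|x.1 - x.2| ^ (-A)) else |x.1 - x.2| ^ (-A)| ≤ g x
    split_ifs <;> simp [abs_neg, abs_of_nonneg (hgnn x), hg, le_refl,
      abs_of_nonneg (Real.rpow_nonneg (abs_nonneg (x.1 - x.2)) (-A))]
  -- the constant bounding φ on [-ε, 0)
  set C : ℝ := ε ^ (-A) * (1 + A + A * (A + 1) / 2) with hC
  have hCnn : 0 ≤ C := by
    have := Real.rpow_nonneg hε.le (-A); positivity
  have e1 : ε ^ (-A - 1) * ε = ε ^ (-A) := by
    rw [← Real.rpow_add_one hε.ne' (-A - 1)]; congr 1; ring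
  have e2 : ε ^ (-A - 2) * ε ^ 2 = ε ^ (-A) := by
    rw [sq, ← mul_assoc, ← Real.rpow_add_one hε.ne' (-A - 2),
      ← Real.rpow_add_one hε.ne' (-A - 2 + 1)]
    congr 1; ring
  have hφbound : ∀ t : ℝ, -ε ≤ t → t < 0 → |φ t| ≤ C := by
    intro t ht1 ht2
    have hs0 : 0 ≤ t + ε := by linarith
    have hsε : t + ε ≤ ε := by linarith
    have hp : 0 ≤ ε ^ (-A) := Real.rpow_nonneg hε.le _
    have hq : 0 ≤ ε ^ (-A - 1) := Real.rpow_nonneg hε.le _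
    have hr : 0 ≤ ε ^ (-A - 2) := Real.rpow_nonneg hε.le _
    have hsq : (t + ε) ^ 2 ≤ ε ^ 2 := pow_le_pow_left₀ hs0 hsε 2
    have hqs : ε ^ (-A - 1) * (t + ε) ≤ ε ^ (-A) :=
      (mul_le_mul_of_nonneg_left hsε hq).trans_eq e1
    have hrs : ε ^ (-A - 2) * (t + ε) ^ 2 ≤ ε ^ (-A) :=
      (mul_le_mul_of_nonneg_left hsq hr).trans_eq e2
    have hqs0 : 0 ≤ ε ^ (-A - 1) * (t + ε) := mul_nonneg hq hs0
    have hrs0 : 0 ≤ ε ^ (-A - 2) * (t + ε) ^ 2 := mul_nonneg hr (sq_nonneg _)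
    have hc2 : (0:ℝ) ≤ A * (A + 1) / 2 := by positivity
    show |ε ^ (-A) + (-A * ε ^ (-A - 1)) * (t + ε)
        + (A * (A + 1) * ε ^ (-A - 2) / 2) * (t + ε) ^ 2| ≤ C
    rw [abs_le, hC]
    constructor
    · nlinarith [mul_le_mul_of_nonneg_left hqs hA.le,
        mul_le_mul_of_nonneg_left hrs hc2,
        mul_nonneg hA.le hqs0, mul_nonneg hc2 hrs0,
        mul_nonneg hA.le hp, mul_nonneg hc2 hp]
    · nlinarith [mul_le_mul_of_nonneg_left hqs hA.le,
        mul_le_mul_of_nonneg_left hrs hc2,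
        mul_nonneg hA.le hqs0, mul_nonneg hc2 hrs0,
        mul_nonneg hA.le hp, mul_nonneg hc2 hp]
  -- integrability of f₂
  have hf₂S : IntegrableOn f₂ S := by
    apply Integrable.mono' (hgS.add (integrableOn_const (C := C) hSfin))
      hf₂m.aestronglyMeasurable
    filter_upwards with x
    rw [Real.norm_eq_abs]
    show |if -ε ≤ x.2 - x.1 ∧ x.2 - x.1 < 0 then φ (x.2 - x.1) else |x.1 - x.2| ^ (-A)|
      ≤ g x + C
    split_ifs with h
    · exact (hφbound _ h.1 h.2).trans (by linarith [hgnn x])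
    · rw [abs_of_nonneg (hgnn x)]; linarith [hCnn]
  set F : ℝ × ℝ → ℝ := fun x => |f₁ x - f₂ x| with hF
  have hFS : IntegrableOn F S := (hf₁S.sub hf₂S).abs
  -- the region V
  set V : Set (ℝ × ℝ) := regionBetween (fun t : ℝ => t) (fun t => t + ε) (Icc 0 (1/2))
    with hV
  have hVmeas : MeasurableSet V :=
    measurableSet_regionBetween (by fun_prop) (by fun_prop) measurableSet_Icc
  have hVsubS : V ⊆ S := by
    rintro ⟨x1, x2⟩ ⟨hx1, hx2⟩
    simp only [mem_Icc] at hx1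
    simp only [mem_Ioo] at hx2
    refine ⟨⟨⟨hx1.1, by linarith⟩, ⟨by linarith, by linarith⟩⟩, ?_⟩
    rw [abs_sub_lt_iff]
    constructor <;> [linarith; linarith]
  have hVvol : volume V = ENNReal.ofReal (ε / 2) := by
    have hfi : IntegrableOn (fun t : ℝ => t) (Icc 0 (1/2)) :=
      (continuous_id.integrableOn_Icc)
    have hgi : IntegrableOn (fun t : ℝ => t + ε) (Icc 0 (1/2)) :=
      ((continuous_id.add continuous_const).integrableOn_Icc)
    have hle : ∀ x ∈ Icc (0:ℝ) (1/2), (fun t : ℝ => t) x ≤ (fun t : ℝ => t + ε) x :=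
      fun x _ => by simp only; linarith
    rw [hV, Measure.volume_eq_prod,
      volume_regionBetween_eq_integral hfi hgi measurableSet_Icc hle]
    have hfun : ((fun t : ℝ => t + ε) - fun t : ℝ => t) = fun _ : ℝ => ε := by
      funext t; simp
    rw [hfun, setIntegral_const, Real.volume_real_Icc_of_le (by norm_num : (0:ℝ) ≤ 1/2),
      smul_eq_mul]
    congr 1; ring
  have hVfin : volume V ≠ ⊤ := by rw [hVvol]; exact ENNReal.ofReal_ne_top
  have hVtoReal : (volume V).toReal = ε / 2 := by
    rw [hVvol, ENNReal.toReal_ofReal (by linarith)]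
  -- lower bound of F on V
  have hFge : ∀ x ∈ V, 2 * ε ^ (-A) ≤ F x := by
    rintro ⟨x1, x2⟩ ⟨hx1, hx2⟩
    simp only [mem_Ioo] at hx2
    have hlt : x1 < x2 := hx2.1
    have hd0 : 0 < x2 - x1 := by linarith
    have hdε : x2 - x1 < ε := by linarith
    have habs : |x1 - x2| = x2 - x1 := by rw [abs_sub_comm, abs_of_pos hd0]
    have hf1 : f₁ (x1, x2) = -(|x1 - x2| ^ (-A)) := if_pos hlt
    have hf2 : f₂ (x1, x2) = |x1 - x2| ^ (-A) := if_neg (by push_neg; intro _; linarith)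
    have hge : ε ^ (-A) ≤ |x1 - x2| ^ (-A) := by
      rw [Real.rpow_neg hε.le, Real.rpow_neg (abs_nonneg _)]
      apply inv_anti₀ (Real.rpow_pos_of_pos (by rw [habs]; exact hd0) A)
      apply Real.rpow_le_rpow (abs_nonneg _) (by rw [habs]; exact hdε.le) hA.le
    show 2 * ε ^ (-A) ≤ |f₁ (x1, x2) - f₂ (x1, x2)|
    rw [hf1, hf2]
    have h0 : (0:ℝ) ≤ |x1 - x2| ^ (-A) := Real.rpow_nonneg (abs_nonneg _) _
    rw [show -(|x1 - x2| ^ (-A)) - |x1 - x2| ^ (-A) = -(2 * |x1 - x2| ^ (-A)) by ring,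
      abs_neg, abs_of_nonneg (by linarith)]
    linarith
  calc 1 * ε ^ (1 - A) = 2 * ε ^ (-A) * (ε / 2) := by
        rw [one_mul, show (1:ℝ) - A = -A + 1 by ring, Real.rpow_add_one hε.ne']
        ring
    _ = 2 * ε ^ (-A) * (volume V).toReal := by rw [hVtoReal]
    _ ≤ ∫ x in V, F x := setIntegral_ge_of_const_le_real hVmeas hVfin hFge (hFS.mono_set hVsubS)
    _ ≤ ∫ x in S, F x := setIntegral_mono_set hFS
        (Filter.Eventually.of_forall fun x => abs_nonneg _) hVsubS.eventuallyLE
end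

section
/- Let h : [0,1]² → ℝ be bounded with bounded first partial derivatives, let 0 < A < 1, and set g(u₁,u₂) = u₁^{−A}u₂^{−A/2} h((1−u₁)√u₂, √u₂). Then there exists B' < ∞ such that |g(u)| ≤ B' u₁^{−A}u₂^{−A/2} and |∂g/∂u₁ (u)| ≤ B' u₁^{−A−1}u₂^{−A/2} for all u ∈ (0,1)². -/
open MeasureTheory Set

/-- Partial derivative with respect to the first coordinate. -/
noncomputable def pd1 (g : ℝ × ℝ → ℝ) (x : ℝ × ℝ) : ℝ :=
  deriv (fun t => g (t, x.2)) x.1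

/-- Partial derivative with respect to the second coordinate. -/
noncomputable def pd2 (g : ℝ × ℝ → ℝ) (x : ℝ × ℝ) : ℝ :=
  deriv (fun t => g (x.1, t)) x.2

lemma pd1_eq_fderiv (h : ℝ × ℝ → ℝ) (hsmooth : ContDiff ℝ 1 h) (p : ℝ × ℝ) :
    pd1 h p = fderiv ℝ h p (1, 0) := by
  have hfd : HasFDerivAt h (fderiv ℝ h p) p :=
    (hsmooth.differentiable one_ne_zero).differentiableAt.hasFDerivAt
  have hline : HasDerivAt (fun t : ℝ => (t, p.2)) ((1 : ℝ), (0 : ℝ)) p.1 :=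
    (hasDerivAt_id p.1).prodMk (hasDerivAt_const p.1 p.2)
  have := hfd.comp_hasDerivAt p.1 hline
  exact this.deriv

/-- For `g(u) = u₁^{−A}u₂^{−A/2} h((1−u₁)√u₂, √u₂)` with `h` bounded with
bounded first partials, `g` and `∂g/∂u₁` satisfy the lower-edge singularity
bounds with exponents `A` and `A/2`. -/
theorem transformed_bounds_g_and_du1
    (A : ℝ) (hA : 0 < A) (hA1 : A < 1)
    (h : ℝ × ℝ → ℝ) (hsmooth : ContDiff ℝ 1 h)
    (M : ℝ) (hbdd : ∀ x : ℝ × ℝ, x ∈ Icc (0:ℝ) 1 ×ˢ Icc (0:ℝ) 1 →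
      |h x| ≤ M ∧ |pd1 h x| ≤ M ∧ |pd2 h x| ≤ M) :
    ∃ B' : ℝ, ∀ u : ℝ × ℝ, u ∈ Ioo (0:ℝ) 1 ×ˢ Ioo (0:ℝ) 1 →
      (letI g : ℝ × ℝ → ℝ := fun v =>
        v.1 ^ (-A) * v.2 ^ (-A/2) * h ((1 - v.1) * Real.sqrt v.2, Real.sqrt v.2)
      |g u| ≤ B' * u.1 ^ (-A) * u.2 ^ (-A/2) ∧
      |pd1 g u| ≤ B' * u.1 ^ (-A - 1) * u.2 ^ (-A/2)) := by
  have hM : 0 ≤ M := le_trans (abs_nonneg _)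
    (hbdd (0, 0) (by constructor <;> exact ⟨le_refl _, zero_le_one⟩)).1
  refine ⟨(A + 1) * M, ?_⟩
  rintro ⟨u₁, u₂⟩ ⟨hu1, hu2⟩
  simp only [Set.mem_Ioo] at hu1 hu2
  dsimp only
  set c := Real.sqrt u₂ with hc
  have hc0 : 0 ≤ c := Real.sqrt_nonneg _
  have hc1 : c ≤ 1 := Real.sqrt_le_one.mpr hu2.2.le
  set p : ℝ × ℝ := ((1 - u₁) * c, c) with hp
  have hpmem : p ∈ Icc (0:ℝ) 1 ×ˢ Icc (0:ℝ) 1 := by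
    refine ⟨⟨mul_nonneg (by linarith [hu1.2]) hc0, ?_⟩, hc0, hc1⟩
    calc (1 - u₁) * c ≤ 1 * 1 := by
          apply mul_le_mul (by linarith [hu1.1]) hc1 hc0 zero_le_one
      _ = 1 := by ring
  obtain ⟨hb1, hb2, _⟩ := hbdd p hpmem
  have hu10 : 0 < u₁ := hu1.1
  have hu20 : 0 < u₂ := hu2.1
  have hK0 : 0 < u₂ ^ (-A/2) := Real.rpow_pos_of_pos hu20 _
  have h1pos : 0 < u₁ ^ (-A) := Real.rpow_pos_of_pos hu10 _
  have h2pos : 0 < u₁ ^ (-A - 1) := Real.rpow_pos_of_pos hu10 _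
  have hle : u₁ ^ (-A) ≤ u₁ ^ (-A - 1) :=
    Real.rpow_le_rpow_of_exponent_ge hu10 hu1.2.le (by linarith)
  constructor
  · -- bound on |g u|
    rw [abs_mul, abs_mul, abs_of_pos h1pos, abs_of_pos hK0]
    have : u₁ ^ (-A) * u₂ ^ (-A/2) * |h p| ≤ u₁ ^ (-A) * u₂ ^ (-A/2) * M := by
      apply mul_le_mul_of_nonneg_left hb1 (by positivity)
    nlinarith [mul_pos h1pos hK0, mul_nonneg (mul_nonneg hA.le hM) (mul_pos h1pos hK0).le]
  · -- bound on |pd1 g u|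
    -- compute the derivative
    have hd1 : HasDerivAt (fun t : ℝ => t ^ (-A)) (-A * u₁ ^ (-A - 1)) u₁ :=
      Real.hasDerivAt_rpow_const (Or.inl hu10.ne')
    have hd2 : HasDerivAt (fun t : ℝ => ((1 - t) * c, c)) ((-c : ℝ), (0 : ℝ)) u₁ := by
      have ha : HasDerivAt (fun t : ℝ => (1 - t) * c) (-c) u₁ := by
        have := ((hasDerivAt_id u₁).const_sub 1).mul_const c
        simpa using this
      exact ha.prodMk (hasDerivAt_const u₁ c)
    have hfd : HasFDerivAt h (fderiv ℝ h p) p :=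
      (hsmooth.differentiable one_ne_zero).differentiableAt.hasFDerivAt
    have hcomp : HasDerivAt (fun t : ℝ => h ((1 - t) * c, c))
        (fderiv ℝ h p (-c, 0)) u₁ := hfd.comp_hasDerivAt u₁ hd2
    have hval : fderiv ℝ h p (-c, 0) = -c * pd1 h p := by
      have : ((-c : ℝ), (0 : ℝ)) = (-c) • ((1 : ℝ), (0 : ℝ)) := by
        simp [Prod.ext_iff]
      rw [this, (fderiv ℝ h p).map_smul, pd1_eq_fderiv h hsmooth p]
      simp
    rw [hval] at hcomp
    have hprod : HasDerivAt (fun t : ℝ => t ^ (-A) * u₂ ^ (-A/2) * h ((1 - t) * c, c))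
        ((-A * u₁ ^ (-A - 1) * u₂ ^ (-A/2)) * h p
          + (u₁ ^ (-A) * u₂ ^ (-A/2)) * (-c * pd1 h p)) u₁ :=
      (hd1.mul_const (u₂ ^ (-A/2))).mul hcomp
    have hderiv : pd1 (fun v : ℝ × ℝ =>
        v.1 ^ (-A) * v.2 ^ (-A/2) * h ((1 - v.1) * Real.sqrt v.2, Real.sqrt v.2)) (u₁, u₂)
        = (-A * u₁ ^ (-A - 1) * u₂ ^ (-A/2)) * h p
          + (u₁ ^ (-A) * u₂ ^ (-A/2)) * (-c * pd1 h p) := by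
      exact hprod.deriv
    rw [hderiv]
    have htri : |(-A * u₁ ^ (-A - 1) * u₂ ^ (-A/2)) * h p
          + (u₁ ^ (-A) * u₂ ^ (-A/2)) * (-c * pd1 h p)|
        ≤ A * u₁ ^ (-A - 1) * u₂ ^ (-A/2) * M
          + u₁ ^ (-A) * u₂ ^ (-A/2) * (c * M) := by
      refine (abs_add_le _ _).trans (add_le_add ?_ ?_)
      · rw [abs_mul]
        have h1 : |(-A * u₁ ^ (-A - 1) * u₂ ^ (-A/2))| = A * u₁ ^ (-A - 1) * u₂ ^ (-A/2) := by
          rw [abs_of_neg (by nlinarith [mul_pos h2pos hK0])]; ring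
        rw [h1]
        exact mul_le_mul_of_nonneg_left hb1 (by positivity)
      · rw [abs_mul]
        have h2 : |u₁ ^ (-A) * u₂ ^ (-A/2)| = u₁ ^ (-A) * u₂ ^ (-A/2) := by
          rw [abs_of_pos (mul_pos h1pos hK0)]
        rw [h2]
        apply mul_le_mul_of_nonneg_left _ (by positivity)
        rw [abs_mul, abs_neg, abs_of_nonneg hc0]
        exact mul_le_mul_of_nonneg_left hb2 hc0
    refine htri.trans ?_
    have key1 : u₁ ^ (-A) * u₂ ^ (-A/2) * (c * M)
        ≤ u₁ ^ (-A - 1) * u₂ ^ (-A/2) * M := by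
      have hcM : c * M ≤ M := by nlinarith
      calc u₁ ^ (-A) * u₂ ^ (-A/2) * (c * M)
          ≤ u₁ ^ (-A) * u₂ ^ (-A/2) * M :=
            mul_le_mul_of_nonneg_left hcM (by positivity)
        _ ≤ u₁ ^ (-A - 1) * u₂ ^ (-A/2) * M := by
            apply mul_le_mul_of_nonneg_right _ hM
            exact mul_le_mul_of_nonneg_right hle hK0.le
    nlinarith [mul_pos h2pos hK0]
end

section
/- Let h : [0,1]² → ℝ be bounded with bounded first and second partial derivatives, let 0 < A < 1, and set g(u₁,u₂) = u₁^{−A}u₂^{−A/2} h((1−u₁)√u₂, √u₂). Then there exists B' < ∞ such that |∂²g/∂u₁∂u₂ (u)| ≤ B' u₁^{−A−1}u₂^{−A/2−1} for all u ∈ (0,1)². -/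
open MeasureTheory Set

lemma comp_hasDerivAt' {f : ℝ×ℝ → ℝ} (hf : Differentiable ℝ f)
    {γ : ℝ → ℝ×ℝ} {v : ℝ×ℝ} {t : ℝ} (hγ : HasDerivAt γ v t) :
    HasDerivAt (fun s => f (γ s)) (fderiv ℝ f (γ t) v) t :=
  (hf (γ t)).hasFDerivAt.comp_hasDerivAt t hγ

lemma fderiv_pair' (f : ℝ×ℝ → ℝ) (p : ℝ×ℝ) (a b : ℝ) :
    fderiv ℝ f p (a, b) = a * fderiv ℝ f p (1,0) + b * fderiv ℝ f p (0,1) := by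
  have hab : ((a,b) : ℝ×ℝ) = a • ((1:ℝ),(0:ℝ)) + b • ((0:ℝ),(1:ℝ)) := by simp
  rw [hab, map_add, _root_.map_smul, _root_.map_smul]; simp [smul_eq_mul]

lemma pd1_eq_fderiv' {f : ℝ×ℝ → ℝ} (hf : Differentiable ℝ f) (x : ℝ×ℝ) :
    pd1 f x = fderiv ℝ f x (1, 0) := by
  have hc : HasDerivAt (fun t : ℝ => (t, x.2)) ((1:ℝ), (0:ℝ)) x.1 :=
    HasDerivAt.prodMk (hasDerivAt_id x.1) (hasDerivAt_const _ _)
  have := comp_hasDerivAt' hf hc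
  simpa [pd1] using this.deriv

lemma pd2_eq_fderiv' {f : ℝ×ℝ → ℝ} (hf : Differentiable ℝ f) (x : ℝ×ℝ) :
    pd2 f x = fderiv ℝ f x (0, 1) := by
  have hc : HasDerivAt (fun t : ℝ => (x.1, t)) ((0:ℝ), (1:ℝ)) x.2 :=
    HasDerivAt.prodMk (hasDerivAt_const _ _) (hasDerivAt_id x.2)
  have := comp_hasDerivAt' hf hc
  simpa [pd2] using this.deriv

lemma bound_lemma' (A M X Y W c₁ c₂ s u₁ a b c d e : ℝ)
    (hA : 0 < A) (hA1 : A < 1) (hM : 0 ≤ M)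
    (hX : 0 < X) (hY : 0 < Y) (hW0 : 0 ≤ W) (hWX : W ≤ X)
    (hs : 0 < s) (hs1 : s ≤ 1) (hu : 0 < u₁) (hu1 : u₁ < 1)
    (hc1 : |c₁| ≤ A/2 * Y) (hc2 : 0 ≤ c₂) (hc2Y : c₂ ≤ Y/2)
    (ha : |a| ≤ M) (hb : |b| ≤ M) (hc : |c| ≤ M) (hd : |d| ≤ M) (he : |e| ≤ M) :
    |(-A) * X * (c₁ * a + c₂ * ((1-u₁) * b + c))
      + W * (c₁ * (-s * b) + c₂ * (-b + (1-u₁) * (-s * d) + -s * e))| ≤ 4*M*X*Y := by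
  have hone : |1 - u₁| ≤ 1 := by rw [abs_of_nonneg (by linarith)]; linarith
  have habs_s : |(-s)| = s := by rw [abs_neg, abs_of_pos hs]
  have q1 : |(1-u₁) * b + c| ≤ 2*M := by
    have h1 := abs_add_le ((1-u₁)*b) c
    have h2 : |(1-u₁)*b| ≤ M := by
      rw [abs_mul]; nlinarith [abs_nonneg b, abs_nonneg (1-u₁)]
    linarith
  have hQ : |c₁ * a + c₂ * ((1-u₁) * b + c)| ≤ A/2*Y*M + Y/2*(2*M) := by
    have h1 := abs_add_le (c₁*a) (c₂*((1-u₁)*b + c))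
    have h2 : |c₁*a| ≤ A/2*Y*M := by
      rw [abs_mul]; exact mul_le_mul hc1 ha (abs_nonneg a) (by positivity)
    have h3 : |c₂*((1-u₁)*b + c)| ≤ Y/2*(2*M) := by
      rw [abs_mul, abs_of_nonneg hc2]
      exact mul_le_mul hc2Y q1 (abs_nonneg _) (by positivity)
    linarith
  have hsb : |(-s * b)| ≤ M := by
    rw [abs_mul, habs_s]; nlinarith [abs_nonneg b]
  have q2 : |-b + (1-u₁) * (-s * d) + -s * e| ≤ 3*M := by
    have h1 := abs_add_le (-b + (1-u₁)*(-s*d)) (-s*e)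
    have h2 := abs_add_le (-b) ((1-u₁)*(-s*d))
    have h3 : |(1-u₁)*(-s*d)| ≤ M := by
      rw [abs_mul, abs_mul, habs_s]
      have hsd : s * |d| ≤ 1 * M := mul_le_mul hs1 hd (abs_nonneg d) zero_le_one
      have := mul_le_mul hone (hsd.trans_eq (one_mul M)) (by positivity) zero_le_one
      simpa using this
    have h4 : |(-s)*e| ≤ M := by rw [abs_mul, habs_s]; nlinarith [abs_nonneg e]
    rw [abs_neg] at h2
    linarith
  have hR : |c₁ * (-s * b) + c₂ * (-b + (1-u₁) * (-s * d) + -s * e)| ≤ A/2*Y*M + Y/2*(3*M) := by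
    have h1 := abs_add_le (c₁*(-s*b)) (c₂*(-b + (1-u₁)*(-s*d) + -s*e))
    have h2 : |c₁*(-s*b)| ≤ A/2*Y*M := by
      rw [abs_mul]; exact mul_le_mul hc1 hsb (abs_nonneg _) (by positivity)
    have h3 : |c₂*(-b + (1-u₁)*(-s*d) + -s*e)| ≤ Y/2*(3*M) := by
      rw [abs_mul, abs_of_nonneg hc2]
      exact mul_le_mul hc2Y q2 (abs_nonneg _) (by positivity)
    linarith
  have h1 := abs_add_le ((-A)*X*(c₁ * a + c₂ * ((1-u₁) * b + c)))
      (W*(c₁ * (-s * b) + c₂ * (-b + (1-u₁) * (-s * d) + -s * e)))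
  have h2 : |(-A)*X*(c₁ * a + c₂ * ((1-u₁) * b + c))|
      = A*X*|c₁ * a + c₂ * ((1-u₁) * b + c)| := by
    rw [abs_mul, abs_mul, abs_neg, abs_of_pos hA, abs_of_pos hX]
  have h3 : |W*(c₁ * (-s * b) + c₂ * (-b + (1-u₁) * (-s * d) + -s * e))|
      = W*|c₁ * (-s * b) + c₂ * (-b + (1-u₁) * (-s * d) + -s * e)| := by
    rw [abs_mul, abs_of_nonneg hW0]
  have h4 : A*X*|c₁ * a + c₂ * ((1-u₁) * b + c)| ≤ A*X*(A/2*Y*M + Y/2*(2*M)) :=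
    mul_le_mul_of_nonneg_left hQ (by positivity)
  have h5 : W*|c₁ * (-s * b) + c₂ * (-b + (1-u₁) * (-s * d) + -s * e)|
      ≤ X*(A/2*Y*M + Y/2*(3*M)) :=
    mul_le_mul hWX hR (abs_nonneg _) hX.le
  have hXYM : 0 ≤ X*Y*M := by positivity
  have hcoef : A*(A/2) + A + A/2 + 3/2 ≤ 4 := by nlinarith
  have hfin : A*X*(A/2*Y*M + Y/2*(2*M)) + X*(A/2*Y*M + Y/2*(3*M)) ≤ 4*M*X*Y := by
    calc A*X*(A/2*Y*M + Y/2*(2*M)) + X*(A/2*Y*M + Y/2*(3*M))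
        = (X*Y*M)*(A*(A/2) + A + A/2 + 3/2) := by ring
      _ ≤ (X*Y*M)*4 := mul_le_mul_of_nonneg_left hcoef hXYM
      _ = 4*M*X*Y := by ring
  linarith

/-- For `g(u) = u₁^{−A}u₂^{−A/2} h((1−u₁)√u₂, √u₂)` with `h` bounded with
bounded first and second partials, the mixed second partial `∂²g/∂u₁∂u₂`
satisfies the lower-edge singularity bound `B' u₁^{−A−1} u₂^{−A/2−1}`. -/
theorem transformed_bound_mixed
    (A : ℝ) (hA : 0 < A) (hA1 : A < 1)
    (h : ℝ × ℝ → ℝ) (hsmooth : ContDiff ℝ 2 h)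
    (M : ℝ) (hbdd : ∀ x : ℝ × ℝ, x ∈ Icc (0:ℝ) 1 ×ˢ Icc (0:ℝ) 1 →
      |h x| ≤ M ∧ |pd1 h x| ≤ M ∧ |pd2 h x| ≤ M ∧
      |pd1 (pd1 h) x| ≤ M ∧ |pd1 (pd2 h) x| ≤ M ∧
      |pd2 (pd1 h) x| ≤ M ∧ |pd2 (pd2 h) x| ≤ M) :
    ∃ B' : ℝ, ∀ u : ℝ × ℝ, u ∈ Ioo (0:ℝ) 1 ×ˢ Ioo (0:ℝ) 1 →
      (letI g : ℝ × ℝ → ℝ := fun v =>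
        v.1 ^ (-A) * v.2 ^ (-A/2) * h ((1 - v.1) * Real.sqrt v.2, Real.sqrt v.2)
      |pd1 (pd2 g) u| ≤ B' * u.1 ^ (-A - 1) * u.2 ^ (-A/2 - 1)) := by
  refine ⟨4 * M, ?_⟩
  intro u hu
  rw [mem_prod, mem_Ioo, mem_Ioo] at hu
  obtain ⟨⟨h01, h11⟩, h02, h12⟩ := hu
  show |pd1 (pd2 (fun v : ℝ×ℝ =>
      v.1 ^ (-A) * v.2 ^ (-A/2) * h ((1 - v.1) * Real.sqrt v.2, Real.sqrt v.2))) u|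
      ≤ 4 * M * u.1 ^ (-A - 1) * u.2 ^ (-A/2 - 1)
  have hdiff : Differentiable ℝ h := hsmooth.differentiable (by norm_num)
  have hfd : ContDiff ℝ 1 (fderiv ℝ h) := hsmooth.fderiv_right (le_refl _)
  have hd1 : Differentiable ℝ (fun x : ℝ×ℝ => fderiv ℝ h x ((1:ℝ),(0:ℝ))) :=
    (((ContinuousLinearMap.apply ℝ ℝ ((1:ℝ),(0:ℝ))).contDiff.comp hfd).differentiable one_ne_zero)
  have hd2 : Differentiable ℝ (fun x : ℝ×ℝ => fderiv ℝ h x ((0:ℝ),(1:ℝ))) :=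
    (((ContinuousLinearMap.apply ℝ ℝ ((0:ℝ),(1:ℝ))).contDiff.comp hfd).differentiable one_ne_zero)
  -- abbreviations
  have hs0 : 0 < Real.sqrt u.2 := Real.sqrt_pos.mpr h02
  have hs1 : Real.sqrt u.2 ≤ 1 := by
    rw [show (1:ℝ) = Real.sqrt 1 by simp]
    exact Real.sqrt_le_sqrt h12.le
  -- Step A: explicit formula for pd2 g (t, u.2)
  have stepA : ∀ t : ℝ, pd2 (fun v : ℝ×ℝ =>
      v.1 ^ (-A) * v.2 ^ (-A/2) * h ((1 - v.1) * Real.sqrt v.2, Real.sqrt v.2)) (t, u.2)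
      = t ^ (-A) * (((-A/2) * u.2 ^ (-A/2-1)) * h ((1-t)*Real.sqrt u.2, Real.sqrt u.2)
        + u.2 ^ (-A/2) * (1/(2*Real.sqrt u.2))
          * ((1-t) * fderiv ℝ h ((1-t)*Real.sqrt u.2, Real.sqrt u.2) (1,0)
            + fderiv ℝ h ((1-t)*Real.sqrt u.2, Real.sqrt u.2) (0,1))) := by
    intro t
    have hsq : HasDerivAt Real.sqrt (1/(2*Real.sqrt u.2)) u.2 :=
      Real.hasDerivAt_sqrt (ne_of_gt h02)
    have hcurve2 : HasDerivAt (fun r => ((1-t)*Real.sqrt r, Real.sqrt r))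
        (((1-t)*(1/(2*Real.sqrt u.2)) : ℝ), (1/(2*Real.sqrt u.2) : ℝ)) u.2 :=
      HasDerivAt.prodMk (hsq.const_mul (1-t)) hsq
    have hcomp2 := comp_hasDerivAt' hdiff hcurve2
    have hr1 : HasDerivAt (fun r : ℝ => r ^ (-A/2)) ((-A/2) * u.2 ^ (-A/2-1)) u.2 :=
      Real.hasDerivAt_rpow_const (Or.inl (ne_of_gt h02))
    have hprod := (hr1.const_mul (t ^ (-A))).mul hcomp2
    rw [fderiv_pair'] at hprod
    have hkey : HasDerivAt
        (fun r : ℝ => t ^ (-A) * r ^ (-A/2) * h ((1-t)*Real.sqrt r, Real.sqrt r))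
        (t ^ (-A) * (((-A/2) * u.2 ^ (-A/2-1)) * h ((1-t)*Real.sqrt u.2, Real.sqrt u.2)
          + u.2 ^ (-A/2) * (1/(2*Real.sqrt u.2))
            * ((1-t) * fderiv ℝ h ((1-t)*Real.sqrt u.2, Real.sqrt u.2) (1,0)
              + fderiv ℝ h ((1-t)*Real.sqrt u.2, Real.sqrt u.2) (0,1)))) u.2 := by
      exact hprod.congr_deriv (by ring)
    simpa [pd2] using hkey.deriv
  -- Step B: differentiate the formula in t at u.1
  have hcurve : HasDerivAt (fun t : ℝ => ((1-t)*Real.sqrt u.2, Real.sqrt u.2))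
      ((-Real.sqrt u.2 : ℝ), (0:ℝ)) u.1 := by
    have hl : HasDerivAt (fun t : ℝ => (1-t)*Real.sqrt u.2) (-Real.sqrt u.2) u.1 := by
      simpa using (((hasDerivAt_const u.1 (1:ℝ)).sub (hasDerivAt_id u.1)).mul_const
        (Real.sqrt u.2))
    exact HasDerivAt.prodMk hl (hasDerivAt_const _ _)
  have key : ∀ f : ℝ×ℝ → ℝ, Differentiable ℝ f →
      HasDerivAt (fun t : ℝ => f ((1-t)*Real.sqrt u.2, Real.sqrt u.2))
        (-Real.sqrt u.2 * fderiv ℝ f ((1-u.1)*Real.sqrt u.2, Real.sqrt u.2) (1,0)) u.1 := by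
    intro f hf
    have := comp_hasDerivAt' hf hcurve
    rw [fderiv_pair'] at this
    simpa using this
  have hH := key h hdiff
  have hH1 := key (fun x : ℝ×ℝ => fderiv ℝ h x ((1:ℝ),(0:ℝ))) hd1
  have hH2 := key (fun x : ℝ×ℝ => fderiv ℝ h x ((0:ℝ),(1:ℝ))) hd2
  have hQ : HasDerivAt (fun t : ℝ =>
      ((-A/2) * u.2 ^ (-A/2-1)) * h ((1-t)*Real.sqrt u.2, Real.sqrt u.2)
        + u.2 ^ (-A/2) * (1/(2*Real.sqrt u.2))
          * ((1-t) * fderiv ℝ h ((1-t)*Real.sqrt u.2, Real.sqrt u.2) (1,0)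
            + fderiv ℝ h ((1-t)*Real.sqrt u.2, Real.sqrt u.2) (0,1)))
      (((-A/2) * u.2 ^ (-A/2-1)) * (-Real.sqrt u.2
          * fderiv ℝ h ((1-u.1)*Real.sqrt u.2, Real.sqrt u.2) (1,0))
        + u.2 ^ (-A/2) * (1/(2*Real.sqrt u.2))
          * (-(fderiv ℝ h ((1-u.1)*Real.sqrt u.2, Real.sqrt u.2) (1,0))
            + (1-u.1) * (-Real.sqrt u.2
              * fderiv ℝ (fun x : ℝ×ℝ => fderiv ℝ h x ((1:ℝ),(0:ℝ)))
                  ((1-u.1)*Real.sqrt u.2, Real.sqrt u.2) (1,0))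
            + -Real.sqrt u.2
              * fderiv ℝ (fun x : ℝ×ℝ => fderiv ℝ h x ((0:ℝ),(1:ℝ)))
                  ((1-u.1)*Real.sqrt u.2, Real.sqrt u.2) (1,0))) u.1 := by
    have hlin : HasDerivAt (fun t : ℝ => 1 - t) (-1 : ℝ) u.1 := by
      simpa using (hasDerivAt_id u.1).const_sub (1:ℝ)
    have hmul := (hlin.mul hH1).add hH2
    have := (hH.const_mul ((-A/2) * u.2 ^ (-A/2-1))).add
      (hmul.const_mul (u.2 ^ (-A/2) * (1/(2*Real.sqrt u.2))))
    exact this.congr_deriv (by ring)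
  have hrp : HasDerivAt (fun t : ℝ => t ^ (-A)) ((-A) * u.1 ^ (-A-1)) u.1 :=
    Real.hasDerivAt_rpow_const (Or.inl (ne_of_gt h01))
  have stepB := hrp.mul hQ
  -- the mixed partial equals the explicit value
  have hfuneq : (fun t : ℝ => pd2 (fun v : ℝ×ℝ =>
      v.1 ^ (-A) * v.2 ^ (-A/2) * h ((1 - v.1) * Real.sqrt v.2, Real.sqrt v.2)) (t, u.2))
      = (fun t : ℝ => t ^ (-A)
        * (((-A/2) * u.2 ^ (-A/2-1)) * h ((1-t)*Real.sqrt u.2, Real.sqrt u.2)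
          + u.2 ^ (-A/2) * (1/(2*Real.sqrt u.2))
            * ((1-t) * fderiv ℝ h ((1-t)*Real.sqrt u.2, Real.sqrt u.2) (1,0)
              + fderiv ℝ h ((1-t)*Real.sqrt u.2, Real.sqrt u.2) (0,1)))) :=
    funext stepA
  have hval : pd1 (pd2 (fun v : ℝ×ℝ =>
      v.1 ^ (-A) * v.2 ^ (-A/2) * h ((1 - v.1) * Real.sqrt v.2, Real.sqrt v.2))) u
      = (-A) * u.1 ^ (-A-1)
        * (((-A/2) * u.2 ^ (-A/2-1)) * h ((1-u.1)*Real.sqrt u.2, Real.sqrt u.2)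
          + u.2 ^ (-A/2) * (1/(2*Real.sqrt u.2))
            * ((1-u.1) * fderiv ℝ h ((1-u.1)*Real.sqrt u.2, Real.sqrt u.2) (1,0)
              + fderiv ℝ h ((1-u.1)*Real.sqrt u.2, Real.sqrt u.2) (0,1)))
      + u.1 ^ (-A)
        * (((-A/2) * u.2 ^ (-A/2-1)) * (-Real.sqrt u.2
            * fderiv ℝ h ((1-u.1)*Real.sqrt u.2, Real.sqrt u.2) (1,0))
          + u.2 ^ (-A/2) * (1/(2*Real.sqrt u.2))
            * (-(fderiv ℝ h ((1-u.1)*Real.sqrt u.2, Real.sqrt u.2) (1,0))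
              + (1-u.1) * (-Real.sqrt u.2
                * fderiv ℝ (fun x : ℝ×ℝ => fderiv ℝ h x ((1:ℝ),(0:ℝ)))
                    ((1-u.1)*Real.sqrt u.2, Real.sqrt u.2) (1,0))
              + -Real.sqrt u.2
                * fderiv ℝ (fun x : ℝ×ℝ => fderiv ℝ h x ((0:ℝ),(1:ℝ)))
                    ((1-u.1)*Real.sqrt u.2, Real.sqrt u.2) (1,0))) := by
    show deriv (fun t : ℝ => pd2 (fun v : ℝ×ℝ =>
        v.1 ^ (-A) * v.2 ^ (-A/2) * h ((1 - v.1) * Real.sqrt v.2, Real.sqrt v.2)) (t, u.2)) u.1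
        = _
    rw [hfuneq]
    exact stepB.deriv
  rw [hval]
  -- bounds on h and its derivatives at the point p
  have hp : (((1-u.1)*Real.sqrt u.2, Real.sqrt u.2) : ℝ×ℝ) ∈ Icc (0:ℝ) 1 ×ˢ Icc (0:ℝ) 1 := by
    rw [mem_prod, mem_Icc, mem_Icc]
    refine ⟨⟨mul_nonneg (by linarith) hs0.le, ?_⟩, hs0.le, hs1⟩
    calc (1-u.1)*Real.sqrt u.2 ≤ 1 * 1 :=
          mul_le_mul (by linarith) hs1 hs0.le zero_le_one
      _ = 1 := one_mul 1
  obtain ⟨B0, B1, B2, B11, B12, -, -⟩ := hbdd _ hp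
  have e1 : pd1 h = fun x : ℝ×ℝ => fderiv ℝ h x ((1:ℝ),(0:ℝ)) :=
    funext (pd1_eq_fderiv' hdiff)
  have e2 : pd2 h = fun x : ℝ×ℝ => fderiv ℝ h x ((0:ℝ),(1:ℝ)) :=
    funext (pd2_eq_fderiv' hdiff)
  rw [e1] at B1 B11
  rw [e2] at B2 B12
  rw [pd1_eq_fderiv' hd1] at B11
  rw [pd1_eq_fderiv' hd2] at B12
  have hM0 : 0 ≤ M := (abs_nonneg _).trans B0
  -- remaining numeric facts
  have hX : (0:ℝ) < u.1 ^ (-A-1) := Real.rpow_pos_of_pos h01 _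
  have hY : (0:ℝ) < u.2 ^ (-A/2-1) := Real.rpow_pos_of_pos h02 _
  have hW0 : (0:ℝ) ≤ u.1 ^ (-A) := (Real.rpow_pos_of_pos h01 _).le
  have hWX : u.1 ^ (-A) ≤ u.1 ^ (-A-1) :=
    Real.rpow_le_rpow_of_exponent_ge h01 h11.le (by linarith)
  have hc1 : |(-A/2) * u.2 ^ (-A/2-1)| ≤ A/2 * u.2 ^ (-A/2-1) := by
    rw [abs_mul, abs_of_pos hY, abs_of_neg (by linarith : -A/2 < 0)]
    apply le_of_eq; ring
  have hc2 : (0:ℝ) ≤ u.2 ^ (-A/2) * (1/(2*Real.sqrt u.2)) := by positivity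
  have hc2Y : u.2 ^ (-A/2) * (1/(2*Real.sqrt u.2)) ≤ u.2 ^ (-A/2-1) / 2 := by
    have erw : u.2 ^ (-A/2 : ℝ) * (1/(2*Real.sqrt u.2))
        = (1/2) * u.2 ^ (-A/2 + -(1/2) : ℝ) := by
      rw [Real.sqrt_eq_rpow, Real.rpow_add h02, Real.rpow_neg h02.le]
      ring
    rw [erw]
    have h2 : u.2 ^ (-A/2 + -(1/2) : ℝ) ≤ u.2 ^ (-A/2-1 : ℝ) :=
      Real.rpow_le_rpow_of_exponent_ge h02 h12.le (by linarith)
    linarith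
  exact bound_lemma' A M (u.1 ^ (-A-1)) (u.2 ^ (-A/2-1)) (u.1 ^ (-A))
    ((-A/2) * u.2 ^ (-A/2-1)) (u.2 ^ (-A/2) * (1/(2*Real.sqrt u.2))) (Real.sqrt u.2) u.1
    (h ((1-u.1)*Real.sqrt u.2, Real.sqrt u.2))
    (fderiv ℝ h ((1-u.1)*Real.sqrt u.2, Real.sqrt u.2) (1,0))
    (fderiv ℝ h ((1-u.1)*Real.sqrt u.2, Real.sqrt u.2) (0,1))
    (fderiv ℝ (fun x : ℝ×ℝ => fderiv ℝ h x ((1:ℝ),(0:ℝ)))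
        ((1-u.1)*Real.sqrt u.2, Real.sqrt u.2) (1,0))
    (fderiv ℝ (fun x : ℝ×ℝ => fderiv ℝ h x ((0:ℝ),(1:ℝ)))
        ((1-u.1)*Real.sqrt u.2, Real.sqrt u.2) (1,0))
    hA hA1 hM0 hX hY hW0 hWX hs0 hs1 h01 h11 hc1 hc2 hc2Y B0 B1 B2 B11 B12
end
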